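/- If H is a positive semidefinite Hermitian matrix partitioned in 2x2 block form with diagonal blocks A and C, then rank H ≤ rank A + rank C. -/

import Mathlib

open Matrix ComplexOrder

lemma rank_fromColumns_le' {m n₁ n₂ : Type*} [Fintype m] [Fintype n₁] [Fintype n₂]
    (B₁ : Matrix m n₁ ℂ) (B₂ : Matrix m n₂ ℂ) :
    (Matrix.fromCols B₁ B₂).rank ≤ B₁.rank + B₂.rank := by
  classical
  have hle : LinearMap.range (Matrix.fromCols B₁ B₂).mulVecLin ≤
      LinearMap.range B₁.mulVecLin ⊔ LinearMap.range B₂.mulVecLin := by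
    rintro x ⟨v, rfl⟩
    have hv : v = Sum.elim (v ∘ Sum.inl) (v ∘ Sum.inr) := by
      ext (i | i) <;> rfl
    rw [Matrix.mulVecLin_apply, hv, Matrix.fromCols_mulVec_sumElim]
    exact Submodule.add_mem_sup ⟨_, rfl⟩ ⟨_, rfl⟩
  calc (Matrix.fromCols B₁ B₂).rank
      ≤ Module.finrank ℂ ↥(LinearMap.range B₁.mulVecLin ⊔ LinearMap.range B₂.mulVecLin) :=
        Submodule.finrank_mono hle
    _ ≤ B₁.rank + B₂.rank := Submodule.finrank_add_le_finrank_add_finrank _ _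

theorem rank_le_rank_add_rank {k l : ℕ}
    (A : Matrix (Fin k) (Fin k) ℂ) (B : Matrix (Fin k) (Fin l) ℂ)
    (C : Matrix (Fin l) (Fin l) ℂ)
    (hH : (Matrix.fromBlocks A B Bᴴ C).PosSemidef) :
    (Matrix.fromBlocks A B Bᴴ C).rank ≤ A.rank + C.rank := by
  obtain ⟨N, hN⟩ : ∃ N : Matrix (Fin k ⊕ Fin l) (Fin k ⊕ Fin l) ℂ,
      Matrix.fromBlocks A B Bᴴ C = Nᴴ * N := by
    open MatrixOrder in exact CStarAlgebra.nonneg_iff_eq_star_mul_self.mp hH.nonneg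
  set N₁ : Matrix (Fin k ⊕ Fin l) (Fin k) ℂ := N.submatrix id Sum.inl with hN₁
  set N₂ : Matrix (Fin k ⊕ Fin l) (Fin l) ℂ := N.submatrix id Sum.inr with hN₂
  have hNc : N = Matrix.fromCols N₁ N₂ := by
    ext i (j | j) <;> rfl
  have hblocks : Matrix.fromBlocks A B Bᴴ C =
      Matrix.fromBlocks (N₁ᴴ * N₁) (N₁ᴴ * N₂) (N₂ᴴ * N₁) (N₂ᴴ * N₂) := by
    rw [hN, hNc, Matrix.conjTranspose_fromCols_eq_fromRows_conjTranspose,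
      Matrix.fromRows_mul_fromCols]
  have hA : A = N₁ᴴ * N₁ := congrArg Matrix.toBlocks₁₁ hblocks
  have hC : C = N₂ᴴ * N₂ := congrArg Matrix.toBlocks₂₂ hblocks
  calc (Matrix.fromBlocks A B Bᴴ C).rank = N.rank := by
        rw [hN, Matrix.rank_conjTranspose_mul_self]
    _ ≤ N₁.rank + N₂.rank := by rw [hNc]; exact rank_fromColumns_le' N₁ N₂
    _ = A.rank + C.rank := by
        rw [hA, hC, Matrix.rank_conjTranspose_mul_self, Matrix.rank_conjTranspose_mul_self]
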